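/- Let n ≥ 3 be an odd integer and G = D_n the dihedral group of order 2n. There exist short exact sequences of G-lattices 0 → N₋ → M₊ → ℤ → 0 and 0 → N₊ → M₋ → ℤ₋ → 0, and neither of these sequences splits as a sequence of ℤ[G]-modules. -/

import Mathlib

open DihedralGroup

namespace Stmt6Aux

variable {n : ℕ}

/-- Extend a vector indexed by `Fin (n-1)` to `ZMod n`, with value `0` at `n-1`. -/
def gext (n : ℕ) (x : Fin (n - 1) → ℤ) (j : ZMod n) : ℤ :=
  if h : (ZMod.val j) < n - 1 then x ⟨ZMod.val j, h⟩ else 0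

lemma gext_add (x y : Fin (n - 1) → ℤ) (j : ZMod n) :
    gext n (x + y) j = gext n x j + gext n y j := by
  unfold gext; split <;> simp

lemma gext_smul (c : ℤ) (x : Fin (n - 1) → ℤ) (j : ZMod n) :
    gext n (c • x) j = c * gext n x j := by
  unfold gext; split <;> simp

def gextL (n : ℕ) : (Fin (n - 1) → ℤ) →ₗ[ℤ] (ZMod n → ℤ) where
  toFun x := gext n x
  map_add' x y := funext (gext_add x y)
  map_smul' c x := funext fun j => gext_smul c x j

/-- The map `N → M`, `u_k ↦ w_k - w_{k+2}` (`k = 0, …, n-2`). -/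
def fmap (n : ℕ) : (Fin (n - 1) → ℤ) →ₗ[ℤ] (ZMod n → ℤ) :=
  gextL n - (LinearMap.funLeft ℤ ℤ (fun j : ZMod n => j - 2)).comp (gextL n)

/-- The augmentation map `M → ℤ`. -/
def qmap (n : ℕ) [NeZero n] : (ZMod n → ℤ) →ₗ[ℤ] ℤ where
  toFun x := ∑ j, x j
  map_add' x y := by simp [Finset.sum_add_distrib]
  map_smul' c x := by simp [Finset.mul_sum]

lemma fmap_apply (x : Fin (n - 1) → ℤ) (j : ZMod n) :
    fmap n x j = gext n x j - gext n x (j - 2) := rfl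

section NeZero
variable [NeZero n]

lemma qmap_apply (x : ZMod n → ℤ) : qmap n x = ∑ j, x j := rfl

lemma qmap_single (i : ZMod n) : qmap n (Pi.single i 1) = 1 := by
  rw [qmap_apply]
  exact Fintype.sum_pi_single' i 1

lemma val_coe_fin (k : Fin (n - 1)) : (((k : ℕ) : ZMod n)).val = (k : ℕ) :=
  ZMod.val_natCast_of_lt (by omega)

lemma gext_single (k : Fin (n - 1)) :
    gext n (Pi.single k 1) = Pi.single ((k : ℕ) : ZMod n) 1 := by
  funext j
  unfold gext
  split
  · next h =>
    rw [Pi.single_apply, Pi.single_apply]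
    by_cases hj : j = ((k : ℕ) : ZMod n)
    · have hv : j.val = (k : ℕ) := by rw [hj, val_coe_fin]
      rw [if_pos hj, if_pos (by exact Fin.ext hv)]
    · rw [if_neg hj, if_neg]
      intro hEq
      apply hj
      have : j.val = (k : ℕ) := congrArg Fin.val hEq
      rw [← ZMod.natCast_zmod_val j, this]
  · next h =>
    rw [Pi.single_apply, if_neg]
    intro hEq
    apply h
    rw [hEq, val_coe_fin]
    omega

lemma fmap_single (k : Fin (n - 1)) :
    fmap n (Pi.single k 1) =
      Pi.single ((k : ℕ) : ZMod n) 1 - Pi.single (((k : ℕ) : ZMod n) + 2) 1 := by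
  funext j
  rw [fmap_apply, gext_single]
  simp only [Pi.sub_apply, Pi.single_apply]
  have key : (j - 2 = ((k : ℕ) : ZMod n)) ↔ (j = ((k : ℕ) : ZMod n) + 2) := by
    constructor <;> intro h
    · rw [← h]; ring
    · rw [h]; ring
  by_cases h2 : j - 2 = ((k : ℕ) : ZMod n)
  · rw [if_pos h2, if_pos (key.mp h2)]
  · rw [if_neg h2, if_neg (fun hh => h2 (key.mpr hh))]

/-- Two linear maps out of `ι → ℤ` agreeing on the basis vectors are equal. -/
lemma ext_single {A : Type*} [AddCommGroup A] [Module ℤ A] {ι : Type*} [Fintype ι]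
    [DecidableEq ι] {L1 L2 : (ι → ℤ) →ₗ[ℤ] A}
    (h : ∀ i, L1 (Pi.single i 1) = L2 (Pi.single i 1)) : L1 = L2 := by
  apply LinearMap.pi_ext
  intro i x
  have hx : Pi.single i x = x • (Pi.single i 1 : ι → ℤ) := by
    funext j
    rw [Pi.smul_apply, Pi.single_apply, Pi.single_apply]
    split <;> simp
  rw [hx, L1.map_smul, L2.map_smul, h]

lemma val_lt_iff (hn : 3 ≤ n) (j : ZMod n) :
    j.val < n - 1 ↔ j ≠ ((n - 1 : ℕ) : ZMod n) := by
  have h1 : j.val < n := ZMod.val_lt j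
  have h2 : (((n - 1 : ℕ) : ZMod n)).val = n - 1 := ZMod.val_natCast_of_lt (by omega)
  constructor
  · intro h hEq
    rw [hEq, h2] at h; omega
  · intro h
    rcases lt_or_ge j.val (n - 1) with h' | h'
    · exact h'
    · exfalso; apply h
      have : j.val = n - 1 := by omega
      rw [← ZMod.natCast_zmod_val j, this]

lemma cast_n_sub_one_add_two (hn : 3 ≤ n) : ((n - 1 : ℕ) : ZMod n) + 2 = 1 := by
  have h : ((n - 1 : ℕ) : ZMod n) + 2 = ((n + 1 : ℕ) : ZMod n) := by
    have hn' : n - 1 + 2 = n + 1 := by omega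
    rw [← hn']
    push_cast
    ring
  rw [h]
  push_cast
  rw [ZMod.natCast_self n]
  ring

lemma one_ne_cast_n_sub_one (hn : 3 ≤ n) : (1 : ZMod n) ≠ ((n - 1 : ℕ) : ZMod n) := by
  intro h
  have h2 : (((n - 1 : ℕ) : ZMod n)).val = n - 1 := ZMod.val_natCast_of_lt (by omega)
  have h1 : ((1 : ZMod n)).val = 1 := by
    rw [show (1 : ZMod n) = ((1 : ℕ) : ZMod n) by push_cast; rfl]
    exact ZMod.val_natCast_of_lt (by omega)
  rw [h] at h1
  omega

lemma fmap_ones (hn : 3 ≤ n) :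
    fmap n (fun _ => (1 : ℤ)) =
      Pi.single (1 : ZMod n) 1 - Pi.single ((n - 1 : ℕ) : ZMod n) 1 := by
  funext j
  rw [fmap_apply]
  have hg : ∀ i : ZMod n,
      gext n (fun _ => (1 : ℤ)) i = if i = ((n - 1 : ℕ) : ZMod n) then 0 else 1 := by
    intro i
    unfold gext
    split
    · next h => rw [if_neg ((val_lt_iff hn i).mp h)]
    · next h =>
      rw [if_pos]
      by_contra hne
      exact h ((val_lt_iff hn i).mpr hne)
  rw [hg, hg]
  have key : (j - 2 = ((n - 1 : ℕ) : ZMod n)) ↔ (j = 1) := by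
    constructor <;> intro h
    · have h' : j - 2 + 2 = ((n - 1 : ℕ) : ZMod n) + 2 := by rw [h]
      rw [sub_add_cancel, cast_n_sub_one_add_two hn] at h'
      exact h'
    · rw [h, ← cast_n_sub_one_add_two hn]; ring
  simp only [Pi.sub_apply, Pi.single_apply]
  by_cases hA : j = ((n - 1 : ℕ) : ZMod n) <;> by_cases hB : j = 1
  · exact absurd (hB ▸ hA) (one_ne_cast_n_sub_one hn)
  · rw [if_pos hA, if_neg (fun h => hB (key.mp h)), if_neg hB, if_pos hA]
  · rw [if_neg hA, if_pos (key.mpr hB), if_pos hB, if_neg hA]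
  · rw [if_neg hA, if_neg (fun h => hB (key.mp h)), if_neg hB, if_neg hA]; norm_num


set_option linter.unusedSectionVars false

/-- Transport an intertwining property from the generators `r 1`, `sr 0` to all of `Dₙ`. -/
lemma comm_all {A B : Type*} [AddCommGroup A] [Module ℤ A] [AddCommGroup B] [Module ℤ B]
    (ρN : Representation ℤ (DihedralGroup n) A) (ρM : Representation ℤ (DihedralGroup n) B)
    (F : A →ₗ[ℤ] B)
    (h1 : ∀ x, F (ρN (r 1) x) = ρM (r 1) (F x))
    (h2 : ∀ x, F (ρN (sr 0) x) = ρM (sr 0) (F x)) :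
    ∀ g x, F (ρN g x) = ρM g (F x) := by
  have hmul : ∀ g h : DihedralGroup n, (∀ x, F (ρN g x) = ρM g (F x)) →
      (∀ x, F (ρN h x) = ρM h (F x)) → ∀ x, F (ρN (g * h) x) = ρM (g * h) (F x) := by
    intro g h hg hh x
    rw [map_mul, map_mul, Module.End.mul_apply, Module.End.mul_apply, hg, hh x]
  have hpow : ∀ k : ℕ, ∀ x,
      F (ρN ((r 1 : DihedralGroup n) ^ k) x) = ρM ((r 1 : DihedralGroup n) ^ k) (F x) := by
    intro k
    induction k with
    | zero => intro x; simp
    | succ k ih => intro x; rw [pow_succ]; exact hmul _ _ ih h1 x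
  have hr : ∀ i : ZMod n, ∀ x, F (ρN (r i) x) = ρM (r i) (F x) := by
    intro i x
    have hri : (r i : DihedralGroup n) = (r 1) ^ (i.val) := by
      rw [r_one_pow, ZMod.natCast_zmod_val]
    rw [hri]; exact hpow _ x
  intro g
  cases g with
  | r i => exact hr i
  | sr i =>
    have hsi : (sr i : DihedralGroup n) = sr 0 * r i := by rw [sr_mul_r, zero_add]
    rw [hsi]; exact hmul _ _ h2 (hr i)

lemma cast_n_sub_one (hn : 3 ≤ n) : ((n - 1 : ℕ) : ZMod n) = -1 := by
  have h : ((n - 1 : ℕ) : ZMod n) + 1 = ((n - 1 + 1 : ℕ) : ZMod n) := by push_cast; ring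
  rw [show n - 1 + 1 = n from by omega, ZMod.natCast_self] at h
  exact eq_neg_of_add_eq_zero_left h

lemma cast_n_sub_two (hn : 3 ≤ n) : ((n - 2 : ℕ) : ZMod n) = -2 := by
  have h : ((n - 2 : ℕ) : ZMod n) + 2 = ((n - 2 + 2 : ℕ) : ZMod n) := by push_cast; ring
  rw [show n - 2 + 2 = n from by omega, ZMod.natCast_self] at h
  exact eq_neg_of_add_eq_zero_left h

lemma fmap_comm_sigma (hn : 3 ≤ n)
    (ρN : Representation ℤ (DihedralGroup n) (Fin (n - 1) → ℤ))
    (ρM : Representation ℤ (DihedralGroup n) (ZMod n → ℤ))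
    (hNσ : ∀ (j : Fin (n - 1)) (h : (j : ℕ) + 1 < n - 1),
      ρN (r 1) (Pi.single j 1) = Pi.single (⟨(j : ℕ) + 1, h⟩ : Fin (n - 1)) 1)
    (hNσ' : ρN (r 1) (Pi.single (⟨n - 2, by have _h := hn; omega⟩ : Fin (n - 1)) 1)
      = -∑ i : Fin (n - 1), Pi.single i 1)
    (hMσ : ∀ i : ZMod n, ρM (r 1) (Pi.single i 1) = Pi.single (i + 1) 1) :
    ∀ x, fmap n (ρN (r 1) x) = ρM (r 1) (fmap n x) := by
  have L : (fmap n).comp (ρN (r 1)) = (ρM (r 1)).comp (fmap n) := by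
    apply ext_single
    intro k
    rw [LinearMap.comp_apply, LinearMap.comp_apply, fmap_single, map_sub, hMσ, hMσ]
    by_cases hk : (k : ℕ) + 1 < n - 1
    · rw [hNσ k hk, fmap_single]
      have e1 : (((⟨(k : ℕ) + 1, hk⟩ : Fin (n - 1)) : ℕ) : ZMod n)
          = ((k : ℕ) : ZMod n) + 1 := by
        show (((k : ℕ) + 1 : ℕ) : ZMod n) = _
        push_cast; ring
      have e2 : ((k : ℕ) : ZMod n) + 1 + 2 = ((k : ℕ) : ZMod n) + 2 + 1 := by ring
      rw [e1, e2]
    · have hk2 : k = (⟨n - 2, by omega⟩ : Fin (n - 1)) := by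
        have := k.isLt
        apply Fin.ext
        show (k : ℕ) = n - 2
        omega
      rw [hk2, hNσ', map_neg]
      have hones : (∑ i : Fin (n - 1), Pi.single i (1 : ℤ)) = fun _ => (1 : ℤ) := by
        funext j
        rw [Finset.sum_apply]
        exact Fintype.sum_pi_single j (fun _ => (1:ℤ))
      rw [hones, fmap_ones hn]
      have eA : (((⟨n - 2, by omega⟩ : Fin (n - 1)) : ℕ) : ZMod n) = -2 := by
        show ((n - 2 : ℕ) : ZMod n) = -2
        exact cast_n_sub_two hn
      rw [eA]
      have eB : (-2 : ZMod n) + 1 = ((n - 1 : ℕ) : ZMod n) := by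
        rw [cast_n_sub_one hn]; ring
      have eC : (-2 : ZMod n) + 2 + 1 = 1 := by ring
      rw [eB, eC, neg_sub]
  intro x
  have := LinearMap.congr_fun L x
  simpa using this

lemma fmap_comm_tau (hn : 3 ≤ n) (ε : ℤ)
    (ρN : Representation ℤ (DihedralGroup n) (Fin (n - 1) → ℤ))
    (ρM : Representation ℤ (DihedralGroup n) (ZMod n → ℤ))
    (hNτ : ∀ j : Fin (n - 1), ρN (sr 0) (Pi.single j 1) = ε • Pi.single j.rev 1)
    (hMτ : ∀ i : ZMod n, ρM (sr 0) (Pi.single i 1) = -(ε • Pi.single (-i) 1)) :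
    ∀ x, fmap n (ρN (sr 0) x) = ρM (sr 0) (fmap n x) := by
  have L : (fmap n).comp (ρN (sr 0)) = (ρM (sr 0)).comp (fmap n) := by
    apply ext_single
    intro k
    rw [LinearMap.comp_apply, LinearMap.comp_apply, hNτ, map_smul, fmap_single,
      fmap_single, map_sub, hMτ, hMτ]
    have hrev : (((k.rev : Fin (n - 1)) : ℕ) : ZMod n) = -((k : ℕ) : ZMod n) - 2 := by
      have hval : ((k.rev : Fin (n - 1)) : ℕ) = n - 2 - (k : ℕ) := by
        have := k.isLt
        show n - 1 - ((k : ℕ) + 1) = n - 2 - (k : ℕ)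
        omega
      rw [hval]
      have hsum : ((n - 2 - (k : ℕ)) + ((k : ℕ) + 2) : ℕ) = n := by
        have := k.isLt; omega
      have h0 : (((n - 2 - (k : ℕ)) + ((k : ℕ) + 2) : ℕ) : ZMod n) = 0 := by
        rw [hsum]; exact ZMod.natCast_self n
      push_cast at h0
      linear_combination h0
    rw [hrev]
    have hrev2 : -((k : ℕ) : ZMod n) - 2 + 2 = -((k : ℕ) : ZMod n) := by ring
    rw [hrev2]
    have e3 : -(((k : ℕ) : ZMod n) + 2) = -((k : ℕ) : ZMod n) - 2 := by ring
    rw [e3, smul_sub]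
    abel
  intro x
  have := LinearMap.congr_fun L x
  simpa using this

lemma qmap_sigma (ρM : Representation ℤ (DihedralGroup n) (ZMod n → ℤ))
    (hMσ : ∀ i : ZMod n, ρM (r 1) (Pi.single i 1) = Pi.single (i + 1) 1) :
    ∀ x, qmap n (ρM (r 1) x) = qmap n x := by
  have L : (qmap n).comp (ρM (r 1)) = qmap n := by
    apply ext_single
    intro i
    rw [LinearMap.comp_apply, hMσ, qmap_single, qmap_single]
  intro x
  have := LinearMap.congr_fun L x
  simpa using this

lemma qmap_tau (ε : ℤ) (ρM : Representation ℤ (DihedralGroup n) (ZMod n → ℤ))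
    (hMτ : ∀ i : ZMod n, ρM (sr 0) (Pi.single i 1) = ε • Pi.single (-i) 1) :
    ∀ x, qmap n (ρM (sr 0) x) = ε * qmap n x := by
  have L : (qmap n).comp (ρM (sr 0)) = ε • qmap n := by
    apply ext_single
    intro i
    rw [LinearMap.comp_apply, hMτ, map_smul, qmap_single, LinearMap.smul_apply, qmap_single]
  intro x
  have := LinearMap.congr_fun L x
  simpa [smul_eq_mul] using this

/-! ### The `2`-step cycle on `ZMod n` -/

def cinv (n : ℕ) : ZMod n := (((n + 1) / 2 : ℕ) : ZMod n)

lemma two_mul_cinv (hodd : Odd n) : (2 : ZMod n) * cinv n = 1 := by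
  obtain ⟨m, hm⟩ := hodd
  have h2 : (2 * ((n + 1) / 2) : ℕ) = n + 1 := by omega
  have h3 : ((n : ℕ) : ZMod n) = 0 := ZMod.natCast_self n
  calc (2 : ZMod n) * cinv n = ((2 * ((n + 1) / 2) : ℕ) : ZMod n) := by
        unfold cinv; push_cast; ring
    _ = ((n + 1 : ℕ) : ZMod n) := by rw [h2]
    _ = 1 := by push_cast; rw [h3]; ring

def EE (n : ℕ) (t : ℕ) : ZMod n := ((n - 1 : ℕ) : ZMod n) + ((2 * t : ℕ) : ZMod n)

def mIdx (n : ℕ) [NeZero n] (j : ZMod n) : ℕ :=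
  ((j - ((n - 1 : ℕ) : ZMod n)) * cinv n).val

lemma mIdx_lt (j : ZMod n) : mIdx n j < n := ZMod.val_lt _

lemma EE_mIdx (hodd : Odd n) (j : ZMod n) : EE n (mIdx n j) = j := by
  unfold EE mIdx
  have hv := ZMod.natCast_zmod_val ((j - ((n - 1 : ℕ) : ZMod n)) * cinv n)
  have h2 := two_mul_cinv (n := n) hodd
  push_cast
  rw [hv]
  linear_combination (j - ((n - 1 : ℕ) : ZMod n)) * h2

lemma mIdx_EE (hodd : Odd n) (t : ℕ) : mIdx n (EE n t) = t % n := by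
  unfold EE mIdx
  have h2 := two_mul_cinv (n := n) hodd
  have key : (((n - 1 : ℕ) : ZMod n) + ((2 * t : ℕ) : ZMod n) - ((n - 1 : ℕ) : ZMod n))
      * cinv n = ((t : ℕ) : ZMod n) := by
    push_cast
    linear_combination ((t : ℕ) : ZMod n) * h2
  rw [key, ZMod.val_natCast]

lemma mIdx_sub_two (hn : 3 ≤ n) (hodd : Odd n) (j : ZMod n) :
    mIdx n (j - 2) = (mIdx n j + (n - 1)) % n := by
  have h2 := two_mul_cinv (n := n) hodd
  have hm1 := cast_n_sub_one hn
  have hv := ZMod.natCast_zmod_val ((j - ((n - 1 : ℕ) : ZMod n)) * cinv n)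
  have key : (j - 2 - ((n - 1 : ℕ) : ZMod n)) * cinv n
      = ((mIdx n j + (n - 1) : ℕ) : ZMod n) := by
    push_cast
    unfold mIdx
    rw [hv]
    linear_combination -hm1 - h2
  unfold mIdx at key ⊢
  rw [key, ZMod.val_natCast]

lemma gext_coe (x : Fin (n - 1) → ℤ) (k : Fin (n - 1)) :
    gext n x ((k : ℕ) : ZMod n) = x k := by
  unfold gext
  rw [dif_pos (by rw [val_coe_fin]; omega)]
  congr 1
  apply Fin.ext
  show (((k : ℕ) : ZMod n)).val = (k : ℕ)
  exact val_coe_fin k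

lemma gext_top (hn : 3 ≤ n) (x : Fin (n - 1) → ℤ) :
    gext n x ((n - 1 : ℕ) : ZMod n) = 0 := by
  unfold gext
  rw [dif_neg]
  rw [ZMod.val_natCast_of_lt (by omega)]
  omega

lemma EE_zero (hn : 3 ≤ n) : EE n 0 = ((n - 1 : ℕ) : ZMod n) := by
  unfold EE; simp

lemma EE_succ_sub_two (t : ℕ) : EE n (t + 1) - 2 = EE n t := by
  unfold EE; push_cast; ring

lemma fmap_injective (hn : 3 ≤ n) (hodd : Odd n) : Function.Injective (fmap n) := by
  intro x y hxy
  have hz : fmap n (x - y) = 0 := by rw [map_sub, hxy, sub_self]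
  suffices hxy0 : x - y = 0 by
    have := sub_eq_zero.mp hxy0; exact this
  set z := x - y with hzdef
  have hper : ∀ j : ZMod n, gext n z j = gext n z (j - 2) := by
    intro j
    have := congrFun hz j
    rw [fmap_apply] at this
    exact sub_eq_zero.mp (by simpa using this)
  have hE : ∀ t : ℕ, gext n z (EE n t) = 0 := by
    intro t
    induction t with
    | zero => rw [EE_zero hn]; exact gext_top hn z
    | succ t ih =>
      rw [hper (EE n (t + 1)), EE_succ_sub_two]
      exact ih
  funext k
  have : gext n z ((k : ℕ) : ZMod n) = 0 := by
    rw [← EE_mIdx (n := n) hodd ((k : ℕ) : ZMod n)]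
    exact hE _
  rw [gext_coe] at this
  simpa using this

lemma qmap_fmap (x : Fin (n - 1) → ℤ) : qmap n (fmap n x) = 0 := by
  rw [qmap_apply]
  have : ∀ j : ZMod n, fmap n x j = gext n x j - gext n x (j - 2) := fun j => rfl
  simp only [this]
  rw [Finset.sum_sub_distrib]
  rw [Fintype.sum_equiv (Equiv.subRight (2 : ZMod n)) (fun j => gext n x (j - 2))
    (fun j => gext n x j) (fun j => rfl)]
  exact sub_self _

lemma sum_EE (hodd : Odd n) (x : ZMod n → ℤ) :
    ∑ t ∈ Finset.range n, x (EE n t) = ∑ j : ZMod n, x j := by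
  apply Finset.sum_bij' (i := fun t _ => EE n t) (j := fun j _ => mIdx n j)
  · intro t ht; exact Finset.mem_univ _
  · intro j hj; exact Finset.mem_range.mpr (mIdx_lt j)
  · intro t ht
    rw [mIdx_EE hodd]
    exact Nat.mod_eq_of_lt (Finset.mem_range.mp ht)
  · intro j hj; exact EE_mIdx hodd j
  · intro t ht; rfl

lemma ker_sub_range (hn : 3 ≤ n) (hodd : Odd n) (x : ZMod n → ℤ) (hx : qmap n x = 0) :
    ∃ y, fmap n y = x := by
  set hfun : ZMod n → ℤ := fun j => ∑ t ∈ Finset.range (mIdx n j), x (EE n (t + 1))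
    with hfun_def
  refine ⟨fun k => hfun ((k : ℕ) : ZMod n), ?_⟩
  have hgy : ∀ j : ZMod n, gext n (fun k => hfun ((k : ℕ) : ZMod n)) j = hfun j := by
    intro j
    unfold gext
    split
    · next hj =>
      show hfun (((j.val : ℕ)) : ZMod n) = hfun j
      rw [ZMod.natCast_zmod_val]
    · next hj =>
      have hjeq : j = ((n - 1 : ℕ) : ZMod n) := by
        by_contra hne
        exact hj ((val_lt_iff hn j).mpr hne)
      have hm0 : mIdx n j = 0 := by
        unfold mIdx
        rw [hjeq, sub_self, zero_mul, ZMod.val_zero]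
      rw [hfun_def]
      simp only [hm0, Finset.range_zero, Finset.sum_empty]
  have key : ∀ j : ZMod n, hfun j - hfun (j - 2) = x j := by
    intro j
    have hm : EE n (mIdx n j) = j := EE_mIdx hodd j
    have hrec : mIdx n (j - 2) = (mIdx n j + (n - 1)) % n := mIdx_sub_two hn hodd j
    by_cases h0 : mIdx n j = 0
    · have hjeq : j = ((n - 1 : ℕ) : ZMod n) := by
        rw [← hm, h0, EE_zero hn]
      have hm2 : mIdx n (j - 2) = n - 1 := by
        rw [hrec, h0, zero_add]
        exact Nat.mod_eq_of_lt (by omega)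
      have hhj : hfun j = 0 := by
        rw [hfun_def]; simp only [h0, Finset.range_zero, Finset.sum_empty]
      have hsum0 : ∑ j' : ZMod n, x j' = 0 := by rw [← qmap_apply]; exact hx
      have hsplit := Finset.sum_range_succ' (fun t => x (EE n t)) (n - 1)
      rw [show n - 1 + 1 = n from by omega] at hsplit
      have hEsum : ∑ t ∈ Finset.range n, x (EE n t) = 0 := by
        rw [sum_EE hodd]; exact hsum0
      have hj2 : hfun (j - 2) = ∑ t ∈ Finset.range (n - 1), x (EE n (t + 1)) := by
        rw [hfun_def]; simp only [hm2]
      have hEE0 : x (EE n 0) = x j := by rw [EE_zero hn, ← hjeq]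
      rw [hhj, hj2]
      have hneg : (∑ t ∈ Finset.range (n - 1), x (EE n (t + 1))) = -x j := by
        have h' : (0 : ℤ) = (∑ t ∈ Finset.range (n - 1), x (EE n (t + 1))) + x (EE n 0) := by
          rw [← hEsum]; exact hsplit
        rw [hEE0] at h'
        linarith
      rw [hneg]; ring
    · have hm2 : mIdx n (j - 2) = mIdx n j - 1 := by
        rw [hrec]
        have h1 : mIdx n j + (n - 1) = (mIdx n j - 1) + 1 * n := by omega
        rw [h1, Nat.add_mul_mod_self_right]
        exact Nat.mod_eq_of_lt (by have := mIdx_lt (n := n) j; omega)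
      have hstep : hfun j = hfun (j - 2) + x j := by
        rw [hfun_def]
        simp only [hm2]
        have h1 : mIdx n j = (mIdx n j - 1) + 1 := by omega
        rw [h1, Finset.sum_range_succ]
        congr 1
        rw [← h1, hm]
      rw [hstep]; ring
  funext j
  rw [fmap_apply, hgy, hgy, key]

lemma shift_eq (ρM : Representation ℤ (DihedralGroup n) (ZMod n → ℤ))
    (hMσ : ∀ i : ZMod n, ρM (r 1) (Pi.single i 1) = Pi.single (i + 1) 1) :
    ρM (r 1) = LinearMap.funLeft ℤ ℤ (fun j : ZMod n => j - 1) := by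
  apply ext_single
  intro i
  rw [hMσ]
  funext j
  simp only [LinearMap.funLeft_apply, Pi.single_apply]
  by_cases h : j = i + 1
  · rw [if_pos h, if_pos (by rw [h]; ring)]
  · rw [if_neg h, if_neg (fun hh => h (sub_eq_iff_eq_add.mp hh))]

lemma const_of_shift (v : ZMod n → ℤ) (hv : ∀ j : ZMod n, v j = v (j - 1)) (j : ZMod n) :
    v j = v 0 := by
  have key : ∀ t : ℕ, ∀ i : ZMod n, v i = v (i - (t : ZMod n)) := by
    intro t
    induction t with
    | zero => intro i; simp
    | succ t ih =>
      intro i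
      rw [ih i, hv (i - (t : ZMod n))]
      congr 1
      push_cast
      ring
  have h := key j.val j
  rw [ZMod.natCast_zmod_val, sub_self] at h
  exact h

lemma no_section (hn : 3 ≤ n) (s : ℤ →ₗ[ℤ] (ZMod n → ℤ))
    (hfix : ∀ j : ZMod n, s 1 j = s 1 (j - 1))
    (hq : (qmap n).comp s = LinearMap.id) : False := by
  have h1 : qmap n (s 1) = 1 := by
    have := LinearMap.congr_fun hq 1
    simpa using this
  have hconst := const_of_shift (s 1) hfix
  rw [qmap_apply] at h1
  have hsum : ∑ j : ZMod n, s 1 j = (n : ℤ) * s 1 0 := by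
    rw [Finset.sum_congr rfl (fun j _ => hconst j), Finset.sum_const, Finset.card_univ,
      ZMod.card, nsmul_eq_mul]
  rw [hsum] at h1
  have hdvd : (n : ℤ) ∣ 1 := ⟨s 1 0, h1.symm⟩
  have h2 := Int.le_of_dvd one_pos hdvd
  have h3 : (3 : ℤ) ≤ (n : ℤ) := by exact_mod_cast hn
  linarith

end NeZero
end Stmt6Aux
open Stmt6Aux in
/-- **Hoshi–Kang–Yamasaki, Lemma 4.4.**
Let `n ≥ 3` be odd and `G = Dₙ`, with `σ = r 1`, `τ = sr 0`.  `ρMp` is the lattice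
`M₊ = ℤ[G/⟨τ⟩]` (free on `w₀,…,w_{n-1}`, `σ·wᵢ = w_{i+1}`, `τ·wᵢ = w_{n-i}`), `ρMm` is
`M₋` (`τ·wᵢ = -w_{n-i}`), `ρNp`/`ρNm` are `N₊`/`N₋` and `ρsgn` is `ℤ₋`.  There are
short exact sequences `0 → N₋ → M₊ → ℤ → 0` and `0 → N₊ → M₋ → ℤ₋ → 0` of
`G`-lattices, and neither splits as a sequence of `ℤ[G]`-modules. -/
theorem stmt6 (n : ℕ) (hn : 3 ≤ n) (hodd : Odd n) [NeZero n]
    (ρMp : Representation ℤ (DihedralGroup n) (ZMod n → ℤ))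
    (hMpσ : ∀ i : ZMod n, ρMp (r 1) (Pi.single i 1) = Pi.single (i + 1) 1)
    (hMpτ : ∀ i : ZMod n, ρMp (sr 0) (Pi.single i 1) = Pi.single (-i) 1)
    (ρMm : Representation ℤ (DihedralGroup n) (ZMod n → ℤ))
    (hMmσ : ∀ i : ZMod n, ρMm (r 1) (Pi.single i 1) = Pi.single (i + 1) 1)
    (hMmτ : ∀ i : ZMod n, ρMm (sr 0) (Pi.single i 1) = -Pi.single (-i) 1)
    (ρNp : Representation ℤ (DihedralGroup n) (Fin (n - 1) → ℤ))
    (hNpσ : ∀ (j : Fin (n - 1)) (h : (j : ℕ) + 1 < n - 1),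
      ρNp (r 1) (Pi.single j 1) = Pi.single (⟨(j : ℕ) + 1, h⟩ : Fin (n - 1)) 1)
    (hNpσ' : ρNp (r 1) (Pi.single (⟨n - 2, by omega⟩ : Fin (n - 1)) 1)
      = -∑ i : Fin (n - 1), Pi.single i 1)
    (hNpτ : ∀ j : Fin (n - 1), ρNp (sr 0) (Pi.single j 1) = Pi.single j.rev 1)
    (ρNm : Representation ℤ (DihedralGroup n) (Fin (n - 1) → ℤ))
    (hNmσ : ∀ (j : Fin (n - 1)) (h : (j : ℕ) + 1 < n - 1),
      ρNm (r 1) (Pi.single j 1) = Pi.single (⟨(j : ℕ) + 1, h⟩ : Fin (n - 1)) 1)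
    (hNmσ' : ρNm (r 1) (Pi.single (⟨n - 2, by omega⟩ : Fin (n - 1)) 1)
      = -∑ i : Fin (n - 1), Pi.single i 1)
    (hNmτ : ∀ j : Fin (n - 1), ρNm (sr 0) (Pi.single j 1) = -Pi.single j.rev 1)
    (ρsgn : Representation ℤ (DihedralGroup n) ℤ)
    (hsgnr : ∀ i : ZMod n, ρsgn (r i) = LinearMap.id)
    (hsgnsr : ∀ i : ZMod n, ρsgn (sr i) = -LinearMap.id) :
    (∃ (f : (Fin (n - 1) → ℤ) →ₗ[ℤ] (ZMod n → ℤ)) (q : (ZMod n → ℤ) →ₗ[ℤ] ℤ),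
      (∀ (g : DihedralGroup n) x, f (ρNm g x) = ρMp g (f x)) ∧
      (∀ (g : DihedralGroup n) x, q (ρMp g x) = q x) ∧
      Function.Injective f ∧ Function.Surjective q ∧
      LinearMap.range f = LinearMap.ker q ∧
      ¬ ∃ s : ℤ →ₗ[ℤ] (ZMod n → ℤ),
          (∀ (g : DihedralGroup n) y, ρMp g (s y) = s y) ∧ q.comp s = LinearMap.id) ∧
    (∃ (f : (Fin (n - 1) → ℤ) →ₗ[ℤ] (ZMod n → ℤ)) (q : (ZMod n → ℤ) →ₗ[ℤ] ℤ),
      (∀ (g : DihedralGroup n) x, f (ρNp g x) = ρMm g (f x)) ∧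
      (∀ (g : DihedralGroup n) x, q (ρMm g x) = ρsgn g (q x)) ∧
      Function.Injective f ∧ Function.Surjective q ∧
      LinearMap.range f = LinearMap.ker q ∧
      ¬ ∃ s : ℤ →ₗ[ℤ] (ZMod n → ℤ),
          (∀ (g : DihedralGroup n) y, ρMm g (s y) = s (ρsgn g y)) ∧
          q.comp s = LinearMap.id) := by
  have hsurj : Function.Surjective (qmap n) := by
    intro y
    refine ⟨y • Pi.single (0 : ZMod n) 1, ?_⟩
    rw [map_smul, qmap_single]
    simp
  have hrange : LinearMap.range (fmap n) = LinearMap.ker (qmap n) := by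
    ext x
    simp only [LinearMap.mem_range, LinearMap.mem_ker]
    constructor
    · rintro ⟨y, rfl⟩
      exact qmap_fmap y
    · intro hx
      exact ker_sub_range hn hodd x hx
  constructor
  · refine ⟨fmap n, qmap n, ?_, ?_, fmap_injective hn hodd, hsurj, hrange, ?_⟩
    · exact comm_all ρNm ρMp (fmap n)
        (fmap_comm_sigma hn ρNm ρMp hNmσ hNmσ' hMpσ)
        (fmap_comm_tau hn (-1) ρNm ρMp
          (fun j => by rw [hNmτ j, neg_one_smul])
          (fun i => by rw [hMpτ i, neg_one_smul, neg_neg]))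
    · intro g x
      have hfin := comm_all ρMp (1 : Representation ℤ (DihedralGroup n) ℤ) (qmap n)
        (fun x => by rw [qmap_sigma ρMp hMpσ x]; rfl)
        (fun x => by
          rw [qmap_tau 1 ρMp (fun i => by rw [hMpτ i, one_smul]) x, one_mul]; rfl)
        g x
      rw [hfin]
      rfl
    · rintro ⟨s, hs, hq⟩
      apply no_section hn s ?_ hq
      intro j
      have h1 : ρMp (r 1) (s 1) = s 1 := hs (r 1) 1
      rw [shift_eq ρMp hMpσ] at h1
      have h2 := congrFun h1 j
      simp only [LinearMap.funLeft_apply] at h2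
      exact h2.symm
  · refine ⟨fmap n, qmap n, ?_, ?_, fmap_injective hn hodd, hsurj, hrange, ?_⟩
    · exact comm_all ρNp ρMm (fmap n)
        (fmap_comm_sigma hn ρNp ρMm hNpσ hNpσ' hMmσ)
        (fmap_comm_tau hn 1 ρNp ρMm
          (fun j => by rw [hNpτ j, one_smul])
          (fun i => by rw [hMmτ i, one_smul]))
    · exact comm_all ρMm ρsgn (qmap n)
        (fun x => by rw [qmap_sigma ρMm hMmσ x, hsgnr 1]; rfl)
        (fun x => by
          rw [qmap_tau (-1) ρMm (fun i => by rw [hMmτ i, neg_one_smul]) x, hsgnsr 0]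
          simp)
    · rintro ⟨s, hs, hq⟩
      apply no_section hn s ?_ hq
      intro j
      have h1 : ρMm (r 1) (s 1) = s 1 := by
        have := hs (r 1) 1
        rw [hsgnr 1, LinearMap.id_apply] at this
        exact this
      rw [shift_eq ρMm hMmσ] at h1
      have h2 := congrFun h1 j
      simp only [LinearMap.funLeft_apply] at h2
      exact h2.symm
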